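/- There exist a one-dimensional closed subspace P of ℓ² and a monotone sequence (Q_n) of closed subspaces of ℓ² (Q_n ≤ Q_{n+1} for all n) such that P ⊓ Q_n = ⊥ for every n, while the intersection of P with the topological closure of the lattice supremum ⨆_n Q_n equals P ≠ ⊥. In particular, in the lattice of closed subspaces of ℓ², binary meet does not preserve suprema of increasing ω-chains, and therefore the binary join operation on the Hilbert lattice is not continuous. -/

import Mathlib

noncomputable section

/-- The Hilbert space `ℓ²` of square-summable complex sequences. -/
abbrev ell2 : Type := lp (fun _ : ℕ => ℂ) 2

namespace MeetAux

noncomputable def e (n : ℕ) : ell2 := lp.single 2 n 1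

noncomputable def v (k : ℕ) : ell2 := e 0 + (k : ℂ)⁻¹ • e k

/-- evaluation at coordinate m, as a linear map -/
noncomputable def ev (m : ℕ) : ell2 →ₗ[ℂ] ℂ where
  toFun x := x m
  map_add' x y := congrFun (lp.coeFn_add x y) m
  map_smul' c x := congrFun (lp.coeFn_smul c x) m

@[simp] lemma ev_apply (m : ℕ) (x : ell2) : ev m x = x m := rfl

lemma e_apply (i j : ℕ) : (e i : ℕ → ℂ) j = if j = i then 1 else 0 := by
  rw [e, lp.single_apply]
  split <;> simp_all

lemma norm_e (k : ℕ) : ‖e k‖ = 1 := by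
  have := lp.norm_single (p := 2) (E := fun _ : ℕ => ℂ) (by norm_num) k 1
  simpa [e] using this

lemma e0_ne : e 0 ≠ 0 := by
  intro h
  have := norm_e 0
  rw [h] at this
  simp at this

end MeetAux

open MeetAux

theorem meet_not_continuous_in_hilbert_lattice :
    ∃ (P : Submodule ℂ ell2) (Q : ℕ → Submodule ℂ ell2),
      IsClosed (P : Set ell2) ∧
      (∃ x : ell2, x ≠ 0 ∧ P = Submodule.span ℂ {x}) ∧
      (∀ n, IsClosed ((Q n : Set ell2))) ∧
      (∀ n, Q n ≤ Q (n + 1)) ∧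
      (∀ n, P ⊓ Q n = ⊥) ∧
      P ⊓ (⨆ n, Q n).topologicalClosure = P ∧
      P ≠ ⊥ := by
  set P : Submodule ℂ ell2 := Submodule.span ℂ {e 0} with hP
  set Q : ℕ → Submodule ℂ ell2 := fun n => Submodule.span ℂ (v '' (Set.Icc 1 n)) with hQ
  have hPfin : FiniteDimensional ℂ P := by
    apply FiniteDimensional.span_of_finite
    exact Set.finite_singleton _
  have hQfin : ∀ n, FiniteDimensional ℂ (Q n) := fun n => by
    apply FiniteDimensional.span_of_finite
    exact (Set.finite_Icc 1 n).image _
  -- key linear functional computation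
  have hvmem : ∀ n, ∀ x ∈ Q n, (x : ℕ → ℂ) 0 = ∑ k ∈ Finset.Icc 1 n, (k : ℂ) * x k := by
    intro n x hx
    have : Q n ≤ LinearMap.ker (ev 0 - ∑ k ∈ Finset.Icc 1 n, (k : ℂ) • ev k) := by
      rw [hQ, Submodule.span_le]
      rintro _ ⟨k, hk, rfl⟩
      simp only [Set.mem_Icc] at hk
      simp only [SetLike.mem_coe, LinearMap.mem_ker, LinearMap.sub_apply, LinearMap.sum_apply,
        LinearMap.smul_apply, ev_apply]
      have hv : ∀ j, (v k : ℕ → ℂ) j = (if j = 0 then 1 else 0) + (k : ℂ)⁻¹ * (if j = k then 1 else 0) := by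
        intro j
        have : (v k : ℕ → ℂ) j = (e 0 : ℕ → ℂ) j + ((k : ℂ)⁻¹ • e k : ell2) j := by
          rw [v, lp.coeFn_add]; rfl
        rw [this, lp.coeFn_smul, Pi.smul_apply, e_apply, e_apply, smul_eq_mul]
      have hk1 : (1 : ℕ) ≤ k := hk.1
      have hk0 : k ≠ 0 := by omega
      rw [hv 0, if_pos rfl, if_neg (by omega)]
      have hsum : ∑ j ∈ Finset.Icc 1 n, (j : ℂ) • (v k : ℕ → ℂ) j = 1 := by
        have : ∀ j ∈ Finset.Icc 1 n, (j : ℂ) • (v k : ℕ → ℂ) j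
            = if j = k then 1 else 0 := by
          intro j hj
          simp only [Finset.mem_Icc] at hj
          rw [hv j, if_neg (by omega), smul_eq_mul]
          split
          · rename_i h; subst h
            field_simp
            ring
          · ring
        rw [Finset.sum_congr rfl this, Finset.sum_ite_eq' (Finset.Icc 1 n) k (fun _ => (1:ℂ))]
        rw [if_pos (Finset.mem_Icc.mpr hk)]
      rw [hsum]
      ring_nf
    have := this hx
    simp only [LinearMap.mem_ker, LinearMap.sub_apply, LinearMap.sum_apply,
      LinearMap.smul_apply, ev_apply, smul_eq_mul] at this
    exact sub_eq_zero.mp this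
  refine ⟨P, Q, Submodule.closed_of_finiteDimensional P, ⟨e 0, e0_ne, hP⟩,
    fun n => Submodule.closed_of_finiteDimensional (Q n), ?_, ?_, ?_, ?_⟩
  · -- monotone
    intro n
    exact Submodule.span_mono (Set.image_mono (Set.Icc_subset_Icc_right (by omega)))
  · -- P ⊓ Q n = ⊥
    intro n
    rw [eq_bot_iff]
    rintro x ⟨hxP, hxQ⟩
    obtain ⟨a, rfl⟩ := Submodule.mem_span_singleton.mp hxP
    have hcoord : ∀ j, ((a • e 0 : ell2) : ℕ → ℂ) j = a * (if j = 0 then 1 else 0) := by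
      intro j
      rw [lp.coeFn_smul, Pi.smul_apply, e_apply, smul_eq_mul]
    have h0 := hvmem n _ hxQ
    have : ∀ k ∈ Finset.Icc 1 n, (k : ℂ) * ((a • e 0 : ell2) : ℕ → ℂ) k = 0 := by
      intro k hk
      simp only [Finset.mem_Icc] at hk
      rw [hcoord k, if_neg (by omega)]
      ring
    rw [Finset.sum_congr rfl this, Finset.sum_const_zero, hcoord 0, if_pos rfl, mul_one] at h0
    have : a • e 0 = 0 := by rw [h0, zero_smul]
    simp [this]
  · -- P ⊓ closure = P
    have he0 : e 0 ∈ (⨆ n, Q n).topologicalClosure := by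
      show e 0 ∈ closure ((⨆ n, Q n : Submodule ℂ ell2) : Set ell2)
      refine mem_closure_of_tendsto (f := fun k : ℕ => v k) (b := Filter.atTop) ?_ ?_
      · -- tendsto v atTop (𝓝 (e 0))
        have : Filter.Tendsto (fun k : ℕ => ‖v k - e 0‖) Filter.atTop (nhds 0) := by
          have heq : ∀ k : ℕ, ‖v k - e 0‖ = ((k : ℝ))⁻¹ := by
            intro k
            rw [v, add_sub_cancel_left, norm_smul, norm_e, mul_one]
            simp
          rw [funext heq]
          exact tendsto_inv_atTop_zero.comp tendsto_natCast_atTop_atTop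
        rw [tendsto_iff_norm_sub_tendsto_zero]
        exact this
      · filter_upwards [Filter.eventually_ge_atTop 1] with k hk
        have : v k ∈ Q k := Submodule.subset_span ⟨k, Set.mem_Icc.mpr ⟨hk, le_refl k⟩, rfl⟩
        exact le_iSup Q k this
    have hPle : P ≤ (⨆ n, Q n).topologicalClosure := by
      rw [hP, Submodule.span_le, Set.singleton_subset_iff]
      exact he0
    exact inf_eq_left.mpr hPle
  · -- P ≠ ⊥
    intro h
    have : e 0 ∈ P := Submodule.mem_span_singleton_self _
    rw [h] at this
    exact e0_ne (Submodule.mem_bot ℂ |>.mp this)
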